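/- For every natural number j ≥ 1, one has t_j = (π^{1−j}/(2·j!)) · J_{j−1/2}(π/2), where J_ν(z) := Σ_{k=0}^∞ (−1)^k (z/2)^{ν+2k} / (k! · Γ(ν+k+1)) is the Bessel function of the first kind of order ν, defined by this convergent series (Γ denoting the Gamma function). Equivalently, t_j = (π^{1−j}/(2·j!)) · Σ_{k=0}^∞ (−1)^k (π/4)^{j−1/2+2k} / (k! · Γ(j+1/2+k)). -/

import Mathlib

open Real

lemma Gamma_nat_add_half' (n : ℕ) :
    Real.Gamma ((n : ℝ) + 1 / 2) = (Nat.factorial (2 * n)) * Real.sqrt π / (4 ^ n * Nat.factorial n) := by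
  induction n with
  | zero =>
    rw [show ((0:ℕ):ℝ) + 1 / 2 = 1 / 2 by norm_num, Real.Gamma_one_half_eq]
    norm_num
  | succ n ih =>
    have h1 : ((n + 1 : ℕ) : ℝ) + 1 / 2 = ((n : ℝ) + 1 / 2) + 1 := by push_cast; ring
    rw [h1, Real.Gamma_add_one (by positivity), ih]
    have h2 : 2 * (n + 1) = (2 * n + 1) + 1 := by ring
    rw [h2, Nat.factorial_succ, Nat.factorial_succ, Nat.factorial_succ]
    push_cast
    have : (Nat.factorial n : ℝ) ≠ 0 := Nat.cast_ne_zero.mpr (Nat.factorial_ne_zero n)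
    field_simp
    ring


/-- The summand `a_{j,k} = (-π²/4)^k / (2j+2k)! · C(j+k, j)`. -/
noncomputable def a (j k : ℕ) : ℝ :=
  (-(π ^ 2) / 4) ^ k / (Nat.factorial (2 * j + 2 * k)) * (Nat.choose (j + k) j)

/-- `t_j = Σ_{k=0}^∞ a_{j,k}`. -/
noncomputable def t (j : ℕ) : ℝ := ∑' k : ℕ, a j k

/-- The Bessel function of the first kind `J_ν(z)`, defined by its series
`J_ν(z) = Σ_{k=0}^∞ (−1)^k (z/2)^{ν+2k} / (k! Γ(ν+k+1))` (real powers). -/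
noncomputable def besselJ (ν z : ℝ) : ℝ :=
  ∑' k : ℕ, (-1) ^ k * (z / 2) ^ (ν + 2 * k) / (Nat.factorial k * Real.Gamma (ν + k + 1))

lemma term_eq (j k : ℕ) :
    a j k = π ^ ((1 : ℝ) - j) / (2 * Nat.factorial j) *
      ((-1) ^ k * (π / 2 / 2) ^ (((j : ℝ) - 1 / 2) + 2 * k) /
        (Nat.factorial k * Real.Gamma (((j : ℝ) - 1 / 2) + k + 1))) := by
  have hG : (((j : ℝ) - 1 / 2) + k + 1) = ((j + k : ℕ) : ℝ) + 1 / 2 := by push_cast; ring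
  rw [hG, Gamma_nat_add_half']
  have hx : (0 : ℝ) < π / 2 / 2 := by positivity
  have hE : (((j : ℝ) - 1 / 2) + 2 * k) = ((j + 2 * k : ℕ) : ℝ) - 1 / 2 := by push_cast; ring
  rw [hE, Real.rpow_sub hx, Real.rpow_natCast,
    show (1 / 2 : ℝ) = ((1 : ℝ)/2) by norm_num,
    ← Real.sqrt_eq_rpow,
    show π / 2 / 2 = π / 4 by ring,
    show Real.sqrt (π / 4) = Real.sqrt π / 2 by
      rw [Real.sqrt_div pi_pos.le, show (4:ℝ) = 2 ^ 2 by norm_num,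
        Real.sqrt_sq (by norm_num : (0:ℝ) ≤ 2)]]
  rw [Real.rpow_sub pi_pos, Real.rpow_one, Real.rpow_natCast]
  have hc : (Nat.choose (j + k) j : ℝ) * (Nat.factorial j) * (Nat.factorial k)
      = (Nat.factorial (j + k)) := by
    rw [add_comm j k]
    push_cast [← Nat.add_choose_mul_factorial_mul_factorial k j]
    ring
  have h24 : (2 * (j + k)) = 2 * j + 2 * k := by ring
  rw [h24] at *
  have hs : Real.sqrt π * Real.sqrt π = π := Real.mul_self_sqrt pi_pos.le
  have hsn : Real.sqrt π ≠ 0 := by positivity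
  have hpn : (π : ℝ) ≠ 0 := pi_ne_zero
  have hfj : (Nat.factorial j : ℝ) ≠ 0 := Nat.cast_ne_zero.mpr (Nat.factorial_ne_zero j)
  have hfk : (Nat.factorial k : ℝ) ≠ 0 := Nat.cast_ne_zero.mpr (Nat.factorial_ne_zero k)
  have hf2 : (Nat.factorial (2 * j + 2 * k) : ℝ) ≠ 0 := Nat.cast_ne_zero.mpr (Nat.factorial_ne_zero _)
  rw [a, ← hc]
  rw [show (-(π ^ 2) / 4 : ℝ) ^ k = (-1) ^ k * π ^ (2 * k) / 4 ^ k by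
    rw [div_pow, neg_pow, pow_mul]]
  rw [pow_add, div_pow, pow_add]
  field_simp
  ring_nf
  rw [Real.sq_sqrt pi_pos.le]
  ring_nf
  rw [mul_assoc _ ((1/4:ℝ)^(k*2)), ← mul_pow]
  norm_num


/-- For `j ≥ 1`, `t_j = (π^{1−j}/(2 j!)) · J_{j−1/2}(π/2)`. -/
theorem t_eq_besselJ (j : ℕ) (hj : 1 ≤ j) :
    t j = π ^ ((1 : ℝ) - j) / (2 * Nat.factorial j) * besselJ ((j : ℝ) - 1 / 2) (π / 2) := by
  rw [t, besselJ, ← tsum_mul_left]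
  exact tsum_congr fun k => term_eq j k
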